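/- Let Z be a finite set, d ≥ 1, and fix weights p : Z → ℝ with p_z ≥ 0 and Σ_{z∈Z} p_z = 1. Fix Hermitian d×d complex matrices A_z^{(i)} for z ∈ Z and i = 1,…,R, and real numbers b_1,…,b_R. Let K be the set of all families ρ = (ρ_z)_{z∈Z} of d×d density matrices satisfying Σ_{z∈Z} p_z Tr[A_z^{(i)} ρ_z] = b_i for every i = 1,…,R, regarded as a convex subset of the real vector space of families of Hermitian d×d matrices indexed by Z. Then every extreme point ρ = (ρ_z)_{z∈Z} of K has at most R indices z ∈ Z for which ρ_z is not pure (i.e., for which Tr[ρ_z²] < 1). -/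

import Mathlib

open Matrix ComplexOrder

/-- Key perturbation lemma: a non-pure density matrix admits a nonzero traceless Hermitian
perturbation direction staying PSD. -/
theorem mixed_perturb {d : ℕ} (ρ : Matrix (Fin d) (Fin d) ℂ)
    (hpsd : ρ.PosSemidef) (htr : ρ.trace = 1) (hmix : (ρ * ρ).trace ≠ 1) :
    ∃ H : Matrix (Fin d) (Fin d) ℂ, H.IsHermitian ∧ H.trace = 0 ∧ H ≠ 0 ∧
      ∀ t : ℝ, |t| ≤ 1 → (ρ + (t : ℂ) • H).PosSemidef := by
  classical
  have hH : ρ.IsHermitian := hpsd.1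
  set U : Matrix (Fin d) (Fin d) ℂ := (hH.eigenvectorUnitary : Matrix (Fin d) (Fin d) ℂ) with hU
  have hUU : star U * U = 1 := (Matrix.mem_unitaryGroup_iff').mp hH.eigenvectorUnitary.2
  have hUU' : U * star U = 1 := (Matrix.mem_unitaryGroup_iff).mp hH.eigenvectorUnitary.2
  set lam : Fin d → ℝ := hH.eigenvalues with hlam
  have hspec : ρ = U * Matrix.diagonal (fun i => (lam i : ℂ)) * star U := by
    exact hH.spectral_theorem
  have hnonneg : ∀ i, 0 ≤ lam i := hpsd.eigenvalues_nonneg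
  have htrdiag : ∀ (v : Fin d → ℂ), (U * Matrix.diagonal v * star U).trace = ∑ i, v i := by
    intro v
    rw [Matrix.trace_mul_cycle, hUU, Matrix.one_mul, Matrix.trace_diagonal]
  have hmul : ∀ (v w : Fin d → ℂ), (U * Matrix.diagonal v * star U) * (U * Matrix.diagonal w * star U)
      = U * Matrix.diagonal (fun i => v i * w i) * star U := by
    intro v w
    calc (U * Matrix.diagonal v * star U) * (U * Matrix.diagonal w * star U)
        = U * (Matrix.diagonal v * ((star U * U) * (Matrix.diagonal w * star U))) := by
          simp only [Matrix.mul_assoc]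
      _ = U * Matrix.diagonal (fun i => v i * w i) * star U := by
          rw [hUU, Matrix.one_mul, ← Matrix.mul_assoc (Matrix.diagonal v),
            Matrix.diagonal_mul_diagonal, Matrix.mul_assoc]
  have hsum1 : ∑ i, lam i = 1 := by
    have : (ρ).trace = ∑ i, (lam i : ℂ) := by rw [hspec]; exact htrdiag _
    rw [htr] at this
    exact_mod_cast this.symm
  have hsq : (ρ * ρ).trace = ∑ i, ((lam i : ℂ)) * ((lam i : ℂ)) := by
    have h2 : ρ * ρ = U * Matrix.diagonal (fun i => (lam i : ℂ) * (lam i : ℂ)) * star U := by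
      rw [hspec]; exact hmul _ _
    rw [h2, htrdiag]
  -- find two distinct indices with positive eigenvalues
  have hjk : ∃ j k, j ≠ k ∧ 0 < lam j ∧ 0 < lam k := by
    by_contra hcon
    push_neg at hcon
    have hex : ∃ j, lam j ≠ 0 := by
      by_contra hall
      push_neg at hall
      simp [hall] at hsum1
    obtain ⟨j, hj⟩ := hex
    have hjpos : 0 < lam j := lt_of_le_of_ne (hnonneg j) (Ne.symm hj)
    have hzero : ∀ k, k ≠ j → lam k = 0 := by
      intro k hk
      exact le_antisymm (hcon j k (Ne.symm hk) hjpos) (hnonneg k)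
    have hlamj : lam j = 1 := by
      rw [← hsum1]
      exact (Finset.sum_eq_single j (fun k _ hk => hzero k hk) (by simp)).symm
    apply hmix
    rw [hsq]
    rw [Finset.sum_eq_single j (fun k _ hk => by simp [hzero k hk]) (by simp)]
    simp [hlamj]
  obtain ⟨j, k, hjk, hj, hk⟩ := hjk
  set m : ℝ := min (lam j) (lam k) with hm
  have hmpos : 0 < m := lt_min hj hk
  set μ : Fin d → ℝ := fun l => (if l = j then m else 0) - (if l = k then m else 0) with hμ
  have hμj : μ j = m := by simp [hμ, hjk]
  have hμk : μ k = -m := by simp [hμ, Ne.symm hjk]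
  refine ⟨U * Matrix.diagonal (fun l => (μ l : ℂ)) * star U, ?_, ?_, ?_, ?_⟩
  · -- Hermitian
    rw [show star U = Uᴴ from rfl]
    exact Matrix.isHermitian_mul_mul_conjTranspose U
      (Matrix.isHermitian_diagonal_of_self_adjoint _
        (by funext l; exact Complex.conj_ofReal _))
  · rw [htrdiag]
    have h1 : ∑ l, ((μ l : ℂ)) = ((∑ l, μ l : ℝ) : ℂ) := by push_cast; rfl
    rw [h1]
    norm_cast
    simp [hμ, Finset.sum_sub_distrib, Finset.sum_ite_eq']
  · intro h0
    have hDiag : star U * (U * Matrix.diagonal (fun l => (μ l : ℂ)) * star U) * U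
        = Matrix.diagonal (fun l => (μ l : ℂ)) := by
      simp only [← Matrix.mul_assoc]
      rw [hUU, Matrix.one_mul, Matrix.mul_assoc, hUU, Matrix.mul_one]
    rw [h0] at hDiag
    simp only [Matrix.mul_zero, Matrix.zero_mul] at hDiag
    have := congrArg (fun M => M j j) hDiag.symm
    simp [Matrix.diagonal_apply_eq, hμj] at this
    exact absurd this (by exact_mod_cast hmpos.ne')
  · intro t ht
    have key : ρ + (t : ℂ) • (U * Matrix.diagonal (fun l => (μ l : ℂ)) * star U)
        = U * Matrix.diagonal (fun l => ((lam l + t * μ l : ℝ) : ℂ)) * star U := by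
      rw [hspec]
      rw [← smul_mul_assoc, ← mul_smul_comm, ← Matrix.add_mul, ← Matrix.mul_add,
        ← Matrix.diagonal_smul, Matrix.diagonal_add]
      congr 2
      funext l
      push_cast
      simp
    rw [key, show star U = Uᴴ from rfl]
    refine Matrix.PosSemidef.mul_mul_conjTranspose_same ?_ U
    refine Matrix.posSemidef_diagonal_iff.mpr fun l => ?_
    rw [Complex.zero_le_real]
    have habs : |t * μ l| ≤ lam l := by
      rcases eq_or_ne l j with rfl | hlj
      · rw [hμj, abs_mul, abs_of_nonneg hmpos.le]
        calc |t| * m ≤ 1 * m := by nlinarith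
        _ ≤ lam l := by rw [one_mul]; exact min_le_left _ _
      rcases eq_or_ne l k with rfl | hlk
      · rw [hμk, abs_mul, abs_neg, abs_of_nonneg hmpos.le]
        calc |t| * m ≤ 1 * m := by nlinarith
        _ ≤ lam l := by rw [one_mul]; exact min_le_right _ _
      · simp [hμ, hlj, hlk, hnonneg l]
    have := neg_abs_le (t * μ l)
    linarith

/-- Hermitian times Hermitian has real trace. -/
theorem trace_mul_herm_real {d : ℕ} {A H : Matrix (Fin d) (Fin d) ℂ}
    (hA : A.IsHermitian) (hH : H.IsHermitian) :
    ((A * H).trace : ℂ) = (((A * H).trace.re : ℝ) : ℂ) := by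
  have : star (A * H).trace = (A * H).trace := by
    rw [← Matrix.trace_conjTranspose, Matrix.conjTranspose_mul, hA.eq, hH.eq,
      Matrix.trace_mul_comm]
  exact (Complex.conj_eq_iff_re.mp this).symm

/-- **Theorem 1 of the paper (extreme-point version).**
Every extreme point of the feasible set `K` of quantum state ensembles consistent with
`R` linear constraints has at most `R` non-pure states. -/
theorem extreme_points_of_feasible_ensembles_have_at_most_R_mixed_states
    {Z : Type*} [Fintype Z] (d R : ℕ) (hd : 1 ≤ d)
    (p : Z → ℝ) (hp : ∀ z, 0 ≤ p z) (hp1 : ∑ z, p z = 1)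
    (A : Z → Fin R → Matrix (Fin d) (Fin d) ℂ)
    (hA : ∀ z i, (A z i).IsHermitian)
    (b : Fin R → ℝ)
    (K : Set (Z → Matrix (Fin d) (Fin d) ℂ))
    (hK : K = {ρ | (∀ z, (ρ z).PosSemidef ∧ (ρ z).trace = 1) ∧
        ∀ i, ∑ z, (p z : ℂ) * (A z i * ρ z).trace = (b i : ℂ)})
    (ρ : Z → Matrix (Fin d) (Fin d) ℂ)
    (hρ : ρ ∈ Set.extremePoints ℝ K) :
    {z : Z | (ρ z * ρ z).trace ≠ 1}.ncard ≤ R := by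
  classical
  by_contra hcard
  push_neg at hcard
  set S : Finset Z := Finset.univ.filter (fun z => (ρ z * ρ z).trace ≠ 1) with hS
  have hSset : {z : Z | (ρ z * ρ z).trace ≠ 1} = (S : Set Z) := by
    ext z; simp [hS]
  rw [hSset, Set.ncard_coe_finset] at hcard
  obtain ⟨hρK, hext⟩ := hρ
  rw [hK] at hρK
  obtain ⟨hstates, hconstr⟩ := hρK
  -- perturbation directions
  have hex : ∀ z : {z // z ∈ S}, ∃ H : Matrix (Fin d) (Fin d) ℂ,
      H.IsHermitian ∧ H.trace = 0 ∧ H ≠ 0 ∧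
      ∀ t : ℝ, |t| ≤ 1 → (ρ z.1 + (t : ℂ) • H).PosSemidef := by
    rintro ⟨z, hz⟩
    exact mixed_perturb (ρ z) (hstates z).1 (hstates z).2
      (by simpa [hS] using hz)
  choose H hHherm hHtr hHne hHpsd using hex
  -- the real constraint coefficients
  set r : {z // z ∈ S} → Fin R → ℝ := fun z i => ((A z.1 i * H z).trace).re with hr
  have hrC : ∀ (z : {z // z ∈ S}) i, ((A z.1 i * H z).trace) = ((r z i : ℝ) : ℂ) :=
    fun z i => trace_mul_herm_real (hA z.1 i) (hHherm z)
  -- linear map with nontrivial kernel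
  let L : ({z // z ∈ S} → ℝ) →ₗ[ℝ] (Fin R → ℝ) :=
    { toFun := fun c i => ∑ z, c z * (p z.1 * r z i)
      map_add' := by
        intro c c'
        funext i
        simp [add_mul, Finset.sum_add_distrib]
      map_smul' := by
        intro a c
        funext i
        simp [Finset.mul_sum, mul_assoc] }
  have hnotinj : ¬ Function.Injective L := by
    intro hinj
    have := LinearMap.finrank_le_finrank_of_injective hinj
    simp [Module.finrank_pi] at this
    omega
  rw [Function.not_injective_iff] at hnotinj
  obtain ⟨c₁, c₂, hL12, hne12⟩ := hnotinj
  set c : {z // z ∈ S} → ℝ := c₁ - c₂ with hc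
  have hLc : L c = 0 := by rw [hc, map_sub, hL12, sub_self]
  have hcne : c ≠ 0 := sub_ne_zero_of_ne hne12
  -- normalize
  have hSne : Nonempty {z // z ∈ S} := by
    obtain ⟨z₁, hz₁⟩ := Finset.card_pos.mp (show 0 < S.card by omega)
    exact ⟨⟨z₁, hz₁⟩⟩
  obtain ⟨z₀, hz₀⟩ := Finite.exists_max (fun z : {z // z ∈ S} => |c z|)
  set M : ℝ := |c z₀| with hM
  have hMpos : 0 < M := by
    obtain ⟨z₁, hz₁⟩ := Function.ne_iff.mp hcne
    calc (0:ℝ) < |c z₁| := abs_pos.mpr hz₁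
    _ ≤ M := hz₀ z₁
  set c' : {z // z ∈ S} → ℝ := fun z => c z / M with hc'
  have hc'le : ∀ z, |c' z| ≤ 1 := by
    intro z
    rw [hc', abs_div, abs_of_pos hMpos, div_le_one hMpos]
    exact hz₀ z
  have hLc' : L c' = 0 := by
    have : c' = (M⁻¹) • c := by funext z; simp [hc', div_eq_inv_mul]
    rw [this, L.map_smul, hLc, smul_zero]
  have hc'ne : c' z₀ ≠ 0 := by
    rw [hc']
    exact div_ne_zero (abs_pos.mp hMpos) hMpos.ne'
  -- the perturbation
  set σ : Z → Matrix (Fin d) (Fin d) ℂ :=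
    fun z => if h : z ∈ S then ((c' ⟨z, h⟩ : ℝ) : ℂ) • H ⟨z, h⟩ else 0 with hσ
  have hσtr : ∀ z, (σ z).trace = 0 := by
    intro z
    rw [hσ]
    by_cases h : z ∈ S
    · simp [h, Matrix.trace_smul, hHtr]
    · simp [h]
  have hσconstr : ∀ i, ∑ z, (p z : ℂ) * (A z i * σ z).trace = 0 := by
    intro i
    have hLci := congrFun hLc' i
    have : ∀ z : Z, (p z : ℂ) * (A z i * σ z).trace
        = if h : z ∈ S then (((c' ⟨z, h⟩ * (p z * r ⟨z, h⟩ i) : ℝ)) : ℂ) else 0 := by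
      intro z
      by_cases h : z ∈ S
      · simp only [hσ, dif_pos h]
        rw [Matrix.mul_smul, Matrix.trace_smul, smul_eq_mul, ← mul_assoc,
          mul_comm ((p z : ℂ)), mul_assoc, hrC ⟨z, h⟩ i]
        push_cast
        ring
      · simp [hσ, h]
    rw [Finset.sum_congr rfl (fun z _ => this z)]
    rw [← Finset.sum_subset (Finset.subset_univ S) (fun z _ hz => dif_neg hz)]
    rw [Finset.sum_subtype S (fun x => Iff.rfl)
      (fun z => if h : z ∈ S then (((c' ⟨z, h⟩ * (p z * r ⟨z, h⟩ i) : ℝ)) : ℂ) else 0)]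
    have h2 : ∀ x : {z // z ∈ S},
        (if h : x.1 ∈ S then (((c' ⟨x.1, h⟩ * (p x.1 * r ⟨x.1, h⟩ i) : ℝ)) : ℂ) else 0)
        = (((c' x * (p x.1 * r x i) : ℝ)) : ℂ) := by
      rintro ⟨x, hx⟩
      rw [dif_pos hx]
    rw [Finset.sum_congr rfl (fun x _ => h2 x)]
    rw [← Complex.ofReal_sum]
    norm_cast
  -- σ is Hermitian-compatible perturbation; define endpoints
  set x : Z → Matrix (Fin d) (Fin d) ℂ := fun z => ρ z + σ z with hx
  set y : Z → Matrix (Fin d) (Fin d) ℂ := fun z => ρ z - σ z with hy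
  have hmemx : x ∈ K := by
    rw [hK]
    refine ⟨fun z => ⟨?_, ?_⟩, fun i => ?_⟩
    · rw [hx]
      by_cases h : z ∈ S
      · simp only [hσ, dif_pos h]
        exact hHpsd ⟨z, h⟩ (c' ⟨z, h⟩) (hc'le _)
      · simp only [hσ, dif_neg h, add_zero]
        exact (hstates z).1
    · rw [hx]
      simp only [Matrix.trace_add, hσtr z, (hstates z).2, add_zero]
    · have : ∀ z, (p z : ℂ) * (A z i * x z).trace
          = (p z : ℂ) * (A z i * ρ z).trace + (p z : ℂ) * (A z i * σ z).trace := by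
        intro z
        rw [hx]
        rw [Matrix.mul_add, Matrix.trace_add, mul_add]
      rw [Finset.sum_congr rfl (fun z _ => this z), Finset.sum_add_distrib,
        hconstr i, hσconstr i, add_zero]
  have hmemy : y ∈ K := by
    rw [hK]
    refine ⟨fun z => ⟨?_, ?_⟩, fun i => ?_⟩
    · rw [hy]
      by_cases h : z ∈ S
      · simp only [hσ, dif_pos h]
        have := hHpsd ⟨z, h⟩ (-(c' ⟨z, h⟩)) (by rw [abs_neg]; exact hc'le _)
        have heq : ρ z + ((-(c' ⟨z, h⟩) : ℝ) : ℂ) • H ⟨z, h⟩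
            = ρ z - ((c' ⟨z, h⟩ : ℝ) : ℂ) • H ⟨z, h⟩ := by
          push_cast
          rw [neg_smul, ← sub_eq_add_neg]
        rwa [heq] at this
      · simp only [hσ, dif_neg h, sub_zero]
        exact (hstates z).1
    · rw [hy]
      simp only [Matrix.trace_sub, hσtr z, (hstates z).2, sub_zero]
    · have : ∀ z, (p z : ℂ) * (A z i * y z).trace
          = (p z : ℂ) * (A z i * ρ z).trace - (p z : ℂ) * (A z i * σ z).trace := by
        intro z
        rw [hy]
        rw [Matrix.mul_sub, Matrix.trace_sub, mul_sub]
      rw [Finset.sum_congr rfl (fun z _ => this z), Finset.sum_sub_distrib,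
        hconstr i, hσconstr i, sub_zero]
  have hseg : ρ ∈ openSegment ℝ x y := by
    refine ⟨1/2, 1/2, by norm_num, by norm_num, by norm_num, ?_⟩
    funext z
    show (1/2 : ℝ) • (ρ z + σ z) + (1/2 : ℝ) • (ρ z - σ z) = ρ z
    module
  have hxρ := hext hmemx hmemy hseg
  -- contradiction: σ (z₀) ≠ 0 but x = ρ forces σ = 0
  have h2 := congrFun hxρ z₀.1
  simp only [hx] at h2
  have hσz₀ : σ z₀.1 = 0 := add_eq_left.mp h2
  rw [hσ] at hσz₀
  simp only [dif_pos z₀.2, Subtype.eta] at hσz₀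
  have hcne0 : ((c' z₀ : ℝ) : ℂ) ≠ 0 := by exact_mod_cast hc'ne
  have hH0 : H z₀ = 0 := (smul_eq_zero.mp hσz₀).resolve_left hcne0
  exact hHne z₀ hH0
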